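/- Let n ≥ 2, let λ be a partition of n, let D ⊆ S_n with indicator vector x ∈ ℝ^{S_n}, and let W_λ ⊆ ℝ^{S_n} be the span of the indicator vectors of all left cosets of Young subgroups of shape λ. Then D is λ-transitive if and only if ⟨x, v⟩ = 0 for every v ∈ W_λ that is orthogonal to the all-ones vector; equivalently, the orthogonal projection of x onto W_λ is a scalar multiple of the all-ones vector. -/

import Mathlib

open scoped Pointwise

/-- `P` is an ordered set partition of `Ω = Fin n`: a list of pairwise disjoint
nonempty subsets of `Fin n` whose union is all of `Fin n`. -/
def IsOSP (n : ℕ) (P : List (Finset (Fin n))) : Prop :=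
  P.Pairwise Disjoint ∧ (∀ s ∈ P, s.Nonempty) ∧ P.foldr (· ∪ ·) ∅ = Finset.univ

/-- `l` is an integer partition of `n`: a weakly decreasing list of positive
integers summing to `n`. -/
def IsPartition (n : ℕ) (l : List ℕ) : Prop :=
  l.Pairwise (· ≥ ·) ∧ (∀ x ∈ l, 0 < x) ∧ l.sum = n

/-- The permutation `g` maps the ordered set partition `P` to `Q`, i.e. `g Pᵢ = Qᵢ`
for all `i` (in particular the lists have the same length). -/
def MapsOSP {n : ℕ} (g : Equiv.Perm (Fin n)) (P Q : List (Finset (Fin n))) : Prop :=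
  List.Forall₂ (fun s t => s.image g = t) P Q

/-- Dominance order on partitions: `Dominance l m` means `l ⊴ m`. -/
def Dominated (l m : List ℕ) : Prop :=
  ∀ j : ℕ, ((l.take j).sum ≤ (m.take j).sum)

/-- A subgroup `G ≤ S_n` is `λ`-transitive if any ordered set partition of shape `λ`
can be mapped to any other by some element of `G`. -/
def IsLamTransGroup {n : ℕ} (G : Subgroup (Equiv.Perm (Fin n))) (lam : List ℕ) : Prop :=
  ∀ P Q : List (Finset (Fin n)), IsOSP n P → IsOSP n Q →
    P.map Finset.card = lam → Q.map Finset.card = lam → ∃ g ∈ G, MapsOSP g P Q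

/-- A set `D ⊆ S_n` is `λ`-transitive if there is a constant `r` such that for any
two ordered set partitions `P, Q` of shape `λ`, exactly `r` elements of `D` map `P` to `Q`. -/
def IsLamTransSet {n : ℕ} (D : Set (Equiv.Perm (Fin n))) (lam : List ℕ) : Prop :=
  ∃ r : ℕ, ∀ P Q : List (Finset (Fin n)), IsOSP n P → IsOSP n Q →
    P.map Finset.card = lam → Q.map Finset.card = lam →
      {g ∈ D | MapsOSP g P Q}.ncard = r

/-- The Young subgroup of the ordered set partition `P`: all permutations fixing
each block of `P` setwise. -/
def YoungSubgroup {n : ℕ} (P : List (Finset (Fin n))) : Subgroup (Equiv.Perm (Fin n)) where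
  carrier := {g | ∀ s ∈ P, s.image g = s}
  one_mem' := by intro s hs; simp
  mul_mem' := by
    intro a b ha hb s hs
    have : ⇑(a * b) = ⇑a ∘ ⇑b := rfl
    rw [this, ← Finset.image_image, hb s hs, ha s hs]
  inv_mem' := by
    intro a ha s hs
    have h1 : s.image ⇑a = s := ha s hs
    conv_lhs => rw [← h1]
    rw [Finset.image_image]
    have : (⇑a⁻¹ ∘ ⇑a) = id := by
      funext x
      simp
    rw [this, Finset.image_id]

/-- `W_λ`: the subspace of `ℝ^{S_n}` spanned by the indicator vectors of all left cosets
`a • Y_P` of Young subgroups of shape `λ`. -/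
def Wspace (n : ℕ) (nu : List ℕ) : Submodule ℝ (Equiv.Perm (Fin n) → ℝ) :=
  Submodule.span ℝ
    {v | ∃ (a : Equiv.Perm (Fin n)) (P : List (Finset (Fin n))),
      IsOSP n P ∧ P.map Finset.card = nu ∧
      v = Set.indicator (a • (YoungSubgroup P : Set (Equiv.Perm (Fin n)))) (fun _ => (1 : ℝ))}


section Aux
variable {n : ℕ}

lemma takeSum_le (l : List ℕ) (i : ℕ) : (l.take i).sum ≤ l.sum := by
  conv_rhs => rw [← List.take_append_drop i l]
  rw [List.sum_append]; omega

lemma mem_foldr_union (P : List (Finset (Fin n))) (x : Fin n) :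
    x ∈ P.foldr (· ∪ ·) ∅ ↔ ∃ s ∈ P, x ∈ s := by
  induction P with
  | nil => simp
  | cons s P ih => simp [List.foldr_cons, Finset.mem_union, ih]

lemma exists_take_interval (l : List ℕ) (x : ℕ) (hx : x < l.sum) :
    ∃ i < l.length, (l.take i).sum ≤ x ∧ x < (l.take (i+1)).sum := by
  induction l generalizing x with
  | nil => simp at hx
  | cons a l ih =>
    by_cases hxa : x < a
    · exact ⟨0, by simp, by simp, by simpa using hxa⟩
    · have hx' : x - a < l.sum := by simp [List.sum_cons] at hx; omega
      obtain ⟨i, hi, h1, h2⟩ := ih (x - a) hx'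
      refine ⟨i+1, by simpa using hi, ?_, ?_⟩
      · simp only [List.take_succ_cons, List.sum_cons]; omega
      · simp only [List.take_succ_cons, List.sum_cons]; omega

def canonOSP (n : ℕ) (lam : List ℕ) (h : lam.sum = n) : List (Finset (Fin n)) :=
  (List.range lam.length).map (fun i =>
    Finset.attachFin (Finset.Ico ((lam.take i).sum) ((lam.take (i+1)).sum))
      (fun m hm => by
        rw [Finset.mem_Ico] at hm
        have h2 := takeSum_le lam (i+1)
        omega))

lemma canonOSP_shape (lam : List ℕ) (h : lam.sum = n) :
    (canonOSP n lam h).map Finset.card = lam := by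
  apply List.ext_getElem
  · simp [canonOSP]
  · intro i h1 h2
    simp only [canonOSP, List.getElem_map, List.getElem_range]
    rw [Finset.card_attachFin, Nat.card_Ico, List.sum_take_succ lam i h2]
    omega

lemma canonOSP_isOSP (lam : List ℕ) (h : lam.sum = n) (hpos : ∀ x ∈ lam, 0 < x) :
    IsOSP n (canonOSP n lam h) := by
  refine ⟨?_, ?_, ?_⟩
  · rw [canonOSP, List.pairwise_map]
    refine (List.pairwise_lt_range : List.Pairwise (· < ·) (List.range lam.length)).imp ?_
    intro i j hij
    rw [Finset.disjoint_left]
    intro a ha hb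
    rw [Finset.mem_attachFin, Finset.mem_Ico] at ha hb
    have hmono : (lam.take (i+1)).sum ≤ (lam.take j).sum := by
      have h3 := takeSum_le (lam.take j) (i+1)
      rwa [List.take_take, min_eq_left hij] at h3
    omega
  · intro s hs
    rw [canonOSP, List.mem_map] at hs
    obtain ⟨i, hi, rfl⟩ := hs
    rw [List.mem_range] at hi
    rw [← Finset.card_pos, Finset.card_attachFin, Nat.card_Ico]
    have h1 := List.sum_take_succ lam i hi
    have h2 := hpos lam[i] (List.getElem_mem hi)
    omega
  · rw [Finset.eq_univ_iff_forall]
    intro x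
    rw [mem_foldr_union]
    have hx : x.val < lam.sum := h ▸ x.isLt
    obtain ⟨i, hi, h1, h2⟩ := exists_take_interval lam x.val hx
    rw [canonOSP]
    refine ⟨_, List.mem_map_of_mem (List.mem_range.mpr hi), ?_⟩
    rw [Finset.mem_attachFin, Finset.mem_Ico]
    exact ⟨h1, h2⟩

def osL (P : List (Finset (Fin n))) : List (Fin n) :=
  P.flatMap (fun s => s.sort (· ≤ ·))

lemma osL_length (P : List (Finset (Fin n))) :
    (osL P).length = (P.map Finset.card).sum := by
  rw [osL, List.length_flatMap]
  congr 1
  simp [Function.comp_def, Finset.length_sort]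

lemma osL_getElem_mem (P : List (Finset (Fin n))) (i : ℕ) (hi : i < P.length) (j : ℕ)
    (h1 : ((P.take i).map Finset.card).sum ≤ j)
    (h2 : j < ((P.take (i+1)).map Finset.card).sum)
    (hj : j < (osL P).length) :
    (osL P)[j] ∈ P[i] := by
  induction P generalizing i j with
  | nil => simp at hi
  | cons s P ih =>
    have hL : osL (s :: P) = s.sort (· ≤ ·) ++ osL P := by
      rw [osL, List.flatMap_cons]; rfl
    cases i with
    | zero =>
      have hjs : j < (s.sort (· ≤ ·)).length := by
        simpa [Finset.length_sort] using h2
      have hstep : (osL (s :: P))[j] = (s.sort (· ≤ ·))[j] := by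
        simp only [hL]
        exact List.getElem_append_left hjs
      rw [List.getElem_cons_zero, hstep]
      exact (Finset.mem_sort _).1 (List.getElem_mem hjs)
    | succ i' =>
      have hcard : s.card ≤ j := by
        simp only [List.take_succ_cons, List.map_cons, List.sum_cons] at h1
        omega
      have hlen : (s.sort (· ≤ ·)).length ≤ j := by
        rwa [Finset.length_sort]
      have hj' : j - s.card < (osL P).length := by
        rw [hL, List.length_append, Finset.length_sort] at hj
        omega
      have hstep : (osL (s :: P))[j] = (osL P)[j - s.card] := by
        simp only [hL]
        rw [List.getElem_append_right hlen]
        congr 1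
        rw [Finset.length_sort]
      rw [List.getElem_cons_succ, hstep]
      apply ih i' (by simpa using hi) (j - s.card)
      · simp only [List.take_succ_cons, List.map_cons, List.sum_cons] at h1
        omega
      · simp only [List.take_succ_cons, List.map_cons, List.sum_cons] at h2
        omega

noncomputable def osEquiv (P : List (Finset (Fin n))) (hP : IsOSP n P)
    (hs : (P.map Finset.card).sum = n) : Equiv.Perm (Fin n) :=
  Equiv.ofBijective
    (fun x => (osL P).get ⟨x.val, by rw [osL_length, hs]; exact x.isLt⟩)
    (Finite.surjective_iff_bijective.mp (by
      intro y
      have hy : y ∈ osL P := by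
        have h1 : y ∈ P.foldr (· ∪ ·) ∅ := by rw [hP.2.2]; exact Finset.mem_univ y
        rw [mem_foldr_union] at h1
        obtain ⟨s, hsP, hys⟩ := h1
        exact List.mem_flatMap.2 ⟨s, hsP, (Finset.mem_sort _).2 hys⟩
      obtain ⟨⟨j, hj⟩, hget⟩ := List.mem_iff_get.1 hy
      exact ⟨⟨j, by rw [← hs, ← osL_length]; exact hj⟩, hget⟩))

lemma osEquiv_image (P : List (Finset (Fin n))) (hP : IsOSP n P)
    (hs : (P.map Finset.card).sum = n) (lam : List ℕ) (hsh : P.map Finset.card = lam)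
    (h : lam.sum = n) (i : ℕ) (hi1 : i < (canonOSP n lam h).length) (hi2 : i < P.length) :
    ((canonOSP n lam h)[i]).image (osEquiv P hP hs) = P[i] := by
  have hil : i < lam.length := by simpa [canonOSP] using hi1
  have hcanon : (canonOSP n lam h)[i]
      = Finset.attachFin (Finset.Ico ((lam.take i).sum) ((lam.take (i+1)).sum))
        (fun m hm => by
          rw [Finset.mem_Ico] at hm
          have h2 := takeSum_le lam (i+1)
          omega) := by
    simp [canonOSP]
  have hsub : ((canonOSP n lam h)[i]).image (osEquiv P hP hs) ⊆ P[i] := by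
    intro y hy
    rw [Finset.mem_image] at hy
    obtain ⟨x, hx, rfl⟩ := hy
    rw [hcanon, Finset.mem_attachFin, Finset.mem_Ico] at hx
    have hx1 : ((P.take i).map Finset.card).sum ≤ x.val := by
      rw [List.map_take, hsh]; exact hx.1
    have hx2 : x.val < ((P.take (i+1)).map Finset.card).sum := by
      rw [List.map_take, hsh]; exact hx.2
    have hmem := osL_getElem_mem P i hi2 x.val hx1 hx2
      (by rw [osL_length, hs]; exact x.isLt)
    exact hmem
  have hcard : (P[i]).card ≤ (((canonOSP n lam h)[i]).image (osEquiv P hP hs)).card := by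
    rw [Finset.card_image_of_injective _ (osEquiv P hP hs).injective, hcanon,
      Finset.card_attachFin, Nat.card_Ico, List.sum_take_succ lam i hil]
    have hgl : lam[i] = P[i].card := by
      rw [List.getElem_of_eq hsh.symm, List.getElem_map]
    omega
  exact Finset.eq_of_subset_of_card_le hsub hcard

lemma mapsOSP_canon (P : List (Finset (Fin n))) (hP : IsOSP n P)
    (hs : (P.map Finset.card).sum = n) (lam : List ℕ) (hsh : P.map Finset.card = lam)
    (h : lam.sum = n) :
    MapsOSP (osEquiv P hP hs) (canonOSP n lam h) P := by
  rw [MapsOSP, List.forall₂_iff_get]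
  have hlenP : P.length = lam.length := by
    rw [← hsh, List.length_map]
  constructor
  · simp [canonOSP, hlenP]
  · intro i h1 h2
    simpa using osEquiv_image P hP hs lam hsh h i h1 h2

lemma image_mul (a b : Equiv.Perm (Fin n)) (s : Finset (Fin n)) :
    s.image ⇑(a * b) = (s.image ⇑b).image ⇑a := by
  rw [Finset.image_image]
  rfl

lemma mapsOSP_inv {a : Equiv.Perm (Fin n)} {P Q : List (Finset (Fin n))}
    (h : MapsOSP a P Q) : MapsOSP a⁻¹ Q P := by
  rw [MapsOSP, List.forall₂_iff_get] at h ⊢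
  obtain ⟨hlen, hget⟩ := h
  refine ⟨hlen.symm, fun i h1 h2 => ?_⟩
  have hg := hget i h2 h1
  rw [← hg, Finset.image_image]
  have hid : (⇑a⁻¹ ∘ ⇑a) = id := by funext x; simp
  rw [hid, Finset.image_id]

lemma mapsOSP_mul {a b : Equiv.Perm (Fin n)} {P Q R : List (Finset (Fin n))}
    (ha : MapsOSP a P Q) (hb : MapsOSP b Q R) : MapsOSP (b * a) P R := by
  rw [MapsOSP, List.forall₂_iff_get] at ha hb ⊢
  obtain ⟨hla, ha⟩ := ha
  obtain ⟨hlb, hb⟩ := hb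
  refine ⟨hla.trans hlb, fun i h1 h2 => ?_⟩
  rw [image_mul, ha i h1 (hla ▸ h1), hb i (hla ▸ h1) h2]

def setM (P Q : List (Finset (Fin n))) : Set (Equiv.Perm (Fin n)) :=
  {g | MapsOSP g P Q}

lemma mapsOSP_self_iff {e : Equiv.Perm (Fin n)} {P : List (Finset (Fin n))} :
    MapsOSP e P P ↔ e ∈ YoungSubgroup P := by
  constructor
  · intro h s hs
    rw [MapsOSP, List.forall₂_iff_get] at h
    obtain ⟨j, rfl⟩ := List.mem_iff_get.1 hs
    exact h.2 j.val j.isLt j.isLt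
  · intro h
    rw [MapsOSP, List.forall₂_iff_get]
    exact ⟨rfl, fun i h1 h2 => h _ (by simpa [List.get_eq_getElem] using List.getElem_mem h1)⟩

lemma setM_self (P : List (Finset (Fin n))) :
    setM P P = (YoungSubgroup P : Set (Equiv.Perm (Fin n))) := by
  ext g
  exact mapsOSP_self_iff

lemma setM_eq_coset {a : Equiv.Perm (Fin n)} {P Q : List (Finset (Fin n))}
    (ha : MapsOSP a P Q) :
    setM P Q = a • (YoungSubgroup P : Set (Equiv.Perm (Fin n))) := by
  ext g
  rw [Set.mem_smul_set_iff_inv_smul_mem, smul_eq_mul, SetLike.mem_coe,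
    ← mapsOSP_self_iff]
  constructor
  · intro hg
    exact mapsOSP_mul hg (mapsOSP_inv ha)
  · intro hg
    have h2 := mapsOSP_mul hg ha
    rwa [mul_inv_cancel_left] at h2

lemma mapsOSP_image_map (a : Equiv.Perm (Fin n)) (P : List (Finset (Fin n))) :
    MapsOSP a P (P.map (fun s => s.image ⇑a)) := by
  rw [MapsOSP, List.forall₂_map_right_iff]
  exact List.forall₂_same.2 (fun s _ => rfl)

lemma isOSP_image_map (a : Equiv.Perm (Fin n)) {P : List (Finset (Fin n))}
    (hP : IsOSP n P) : IsOSP n (P.map (fun s => s.image ⇑a)) := by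
  refine ⟨?_, ?_, ?_⟩
  · rw [List.pairwise_map]
    exact hP.1.imp (fun hst => (Finset.disjoint_image a.injective).2 hst)
  · intro s hs
    rw [List.mem_map] at hs
    obtain ⟨t, ht, rfl⟩ := hs
    exact (hP.2.1 t ht).image _
  · have hfold : ∀ Q : List (Finset (Fin n)),
        (Q.map (fun s => s.image ⇑a)).foldr (· ∪ ·) ∅
          = (Q.foldr (· ∪ ·) ∅).image ⇑a := by
      intro Q
      induction Q with
      | nil => simp
      | cons t Q ih => simp [Finset.image_union, ih]
    rw [hfold, hP.2.2]
    apply Finset.eq_univ_of_forall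
    intro y
    exact Finset.mem_image.2 ⟨a⁻¹ y, Finset.mem_univ _, by simp⟩

lemma shape_image_map (a : Equiv.Perm (Fin n)) (P : List (Finset (Fin n))) :
    (P.map (fun s => s.image ⇑a)).map Finset.card = P.map Finset.card := by
  rw [List.map_map]
  congr 1
  funext s
  exact Finset.card_image_of_injective s a.injective

lemma setM_translate {b c : Equiv.Perm (Fin n)} {P' Q' P Q : List (Finset (Fin n))}
    (hb : MapsOSP b P' P) (hc : MapsOSP c Q' Q) :
    setM P Q = (fun g => c * g * b⁻¹) '' setM P' Q' := by
  ext g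
  constructor
  · intro hg
    refine ⟨c⁻¹ * (g * b), mapsOSP_mul (mapsOSP_mul hb hg) (mapsOSP_inv hc), ?_⟩
    group
  · rintro ⟨h, hh, rfl⟩
    have h1 : MapsOSP (h * b⁻¹) P Q' := mapsOSP_mul (mapsOSP_inv hb) hh
    have h2 : MapsOSP (c * (h * b⁻¹)) P Q := mapsOSP_mul h1 hc
    rwa [← mul_assoc] at h2

lemma setM_ncard_translate {b c : Equiv.Perm (Fin n)} {P' Q' P Q : List (Finset (Fin n))}
    (hb : MapsOSP b P' P) (hc : MapsOSP c Q' Q) :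
    (setM P Q).ncard = (setM P' Q').ncard := by
  rw [setM_translate hb hc]
  apply Set.ncard_image_of_injective
  intro x y hxy
  exact mul_left_cancel (mul_right_cancel hxy)

lemma sum_indicator_eq (S : Set (Equiv.Perm (Fin n))) :
    ∑ g : Equiv.Perm (Fin n), S.indicator (fun _ => (1 : ℝ)) g = S.ncard := by
  classical
  rw [Set.ncard_eq_toFinset_card']
  have hite : ∀ g, S.indicator (fun _ => (1 : ℝ)) g = if g ∈ S then 1 else 0 := by
    intro g; simp [Set.indicator_apply]
  simp_rw [hite]
  rw [Finset.sum_boole]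
  have hfe : Finset.univ.filter (fun g : Equiv.Perm (Fin n) => g ∈ S) = S.toFinset := by
    ext g; simp
  rw [hfe]

lemma indicator_mul_indicator (D S : Set (Equiv.Perm (Fin n))) (g : Equiv.Perm (Fin n)) :
    D.indicator (fun _ => (1 : ℝ)) g * S.indicator (fun _ => (1 : ℝ)) g
      = (D ∩ S).indicator (fun _ => (1 : ℝ)) g := by
  classical
  by_cases hD : g ∈ D <;> by_cases hS : g ∈ S <;>
    simp [Set.indicator_apply, hD, hS, Set.mem_inter_iff]

lemma sum_indicator_mul (D S : Set (Equiv.Perm (Fin n))) :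
    ∑ g : Equiv.Perm (Fin n), D.indicator (fun _ => (1 : ℝ)) g
        * S.indicator (fun _ => (1 : ℝ)) g = ((D ∩ S).ncard : ℝ) := by
  simp_rw [indicator_mul_indicator]
  exact sum_indicator_eq _

lemma sep_eq_inter_setM (D : Set (Equiv.Perm (Fin n))) (P Q : List (Finset (Fin n))) :
    {g ∈ D | MapsOSP g P Q} = D ∩ setM P Q := by
  ext g
  simp [setM, Set.mem_inter_iff, Set.mem_setOf_eq]

end Aux

/-- `D ⊆ S_n` (with indicator vector `x`) is `λ`-transitive if and only if `⟨x, v⟩ = 0`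
for every `v ∈ W_λ` that is orthogonal to the all-ones vector. -/
theorem lamTransSet_iff_orthogonal (n : ℕ) (hn : 2 ≤ n) (lam : List ℕ)
    (hlam : IsPartition n lam) (D : Set (Equiv.Perm (Fin n))) :
    IsLamTransSet D lam ↔
      ∀ v : Equiv.Perm (Fin n) → ℝ, v ∈ Wspace n lam →
        (∑ g : Equiv.Perm (Fin n), v g) = 0 →
        (∑ g : Equiv.Perm (Fin n), Set.indicator D (fun _ => (1 : ℝ)) g * v g) = 0 := by
  classical
  obtain ⟨hsort, hpos, hsum⟩ := hlam
  set P0 : List (Finset (Fin n)) := canonOSP n lam hsum with hP0def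
  have hP0 : IsOSP n P0 := canonOSP_isOSP lam hsum hpos
  have hsh0 : P0.map Finset.card = lam := canonOSP_shape lam hsum
  have hexists : ∀ P : List (Finset (Fin n)), IsOSP n P → P.map Finset.card = lam →
      ∃ b : Equiv.Perm (Fin n), MapsOSP b P0 P := by
    intro P hP hsh
    exact ⟨osEquiv P hP (by rw [hsh, hsum]), mapsOSP_canon P hP _ lam hsh hsum⟩
  have hconst : ∀ P Q : List (Finset (Fin n)), IsOSP n P → IsOSP n Q →
      P.map Finset.card = lam → Q.map Finset.card = lam →
      (setM P Q).ncard = (setM P0 P0).ncard := by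
    intro P Q hP hQ hshP hshQ
    obtain ⟨b, hb⟩ := hexists P hP hshP
    obtain ⟨c, hc⟩ := hexists Q hQ hshQ
    exact setM_ncard_translate hb hc
  set s : ℕ := (setM P0 P0).ncard with hsdef
  have hs_pos : 0 < s := by
    rw [hsdef]
    rw [Set.ncard_pos (Set.toFinite _)]
    exact ⟨1, mapsOSP_self_iff.2 (one_mem _)⟩
  have hs_ne : (s : ℝ) ≠ 0 := Nat.cast_ne_zero.2 (by omega)
  constructor
  · rintro ⟨r, hr⟩ v hv hsumv
    have key : ∀ w : Equiv.Perm (Fin n) → ℝ, w ∈ Wspace n lam →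
        (∑ g : Equiv.Perm (Fin n), Set.indicator D (fun _ => (1 : ℝ)) g * w g)
          = ((r : ℝ) / (s : ℝ)) * ∑ g : Equiv.Perm (Fin n), w g := by
      intro w hw
      have hw' : w ∈ Submodule.span ℝ
          {v | ∃ (a : Equiv.Perm (Fin n)) (P : List (Finset (Fin n))),
            IsOSP n P ∧ P.map Finset.card = lam ∧
            v = Set.indicator (a • (YoungSubgroup P : Set (Equiv.Perm (Fin n))))
              (fun _ => (1 : ℝ))} := hw
      induction hw' using Submodule.span_induction with
      | mem w hwmem =>
        obtain ⟨a, P, hP, hsh, rfl⟩ := hwmem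
        have hset : (a • (YoungSubgroup P : Set (Equiv.Perm (Fin n))))
            = setM P (P.map (fun t => t.image ⇑a)) :=
          (setM_eq_coset (mapsOSP_image_map a P)).symm
        rw [hset, sum_indicator_mul, sum_indicator_eq]
        have hQOSP := isOSP_image_map a hP
        have hQsh : (P.map (fun t => t.image ⇑a)).map Finset.card = lam := by
          rw [shape_image_map, hsh]
        have h1 := hr P _ hP hQOSP hsh hQsh
        rw [sep_eq_inter_setM] at h1
        rw [h1, hconst P _ hP hQOSP hsh hQsh, div_mul_cancel₀ _ hs_ne]
      | zero => simp
      | add w1 w2 hm1 hm2 h1 h2 =>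
        simp only [Pi.add_apply, mul_add]
        rw [Finset.sum_add_distrib, Finset.sum_add_distrib, h1 hm1, h2 hm2, mul_add]
      | smul t w1 hm1 h1 =>
        simp only [Pi.smul_apply, smul_eq_mul]
        have hc : ∀ g : Equiv.Perm (Fin n),
            Set.indicator D (fun _ => (1 : ℝ)) g * (t * w1 g)
              = t * (Set.indicator D (fun _ => (1 : ℝ)) g * w1 g) := by
          intro g; ring
        simp_rw [hc]
        rw [← Finset.mul_sum, ← Finset.mul_sum, h1 hm1]
        ring
    rw [key v hv, hsumv, mul_zero]
  · intro hOrth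
    refine ⟨(D ∩ setM P0 P0).ncard, ?_⟩
    intro P Q hP hQ hshP hshQ
    rw [sep_eq_inter_setM]
    obtain ⟨b, hb⟩ := hexists P hP hshP
    obtain ⟨c, hc⟩ := hexists Q hQ hshQ
    have hbc : MapsOSP (c * b⁻¹) P Q := mapsOSP_mul (mapsOSP_inv hb) hc
    set u1 : Equiv.Perm (Fin n) → ℝ := Set.indicator (setM P Q) (fun _ => (1 : ℝ)) with hu1def
    set u0 : Equiv.Perm (Fin n) → ℝ := Set.indicator (setM P0 P0) (fun _ => (1 : ℝ)) with hu0def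
    have hu1 : u1 ∈ Wspace n lam := Submodule.subset_span
      ⟨c * b⁻¹, P, hP, hshP, by rw [hu1def, setM_eq_coset hbc]⟩
    have hu0 : u0 ∈ Wspace n lam := Submodule.subset_span
      ⟨1, P0, hP0, hsh0, by rw [hu0def, one_smul, setM_self]⟩
    have hmem : u1 - u0 ∈ Wspace n lam := sub_mem hu1 hu0
    have hsum0 : (∑ g : Equiv.Perm (Fin n), (u1 - u0) g) = 0 := by
      simp only [Pi.sub_apply]
      rw [Finset.sum_sub_distrib, hu1def, hu0def, sum_indicator_eq, sum_indicator_eq,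
        hconst P Q hP hQ hshP hshQ, sub_self]
    have h := hOrth _ hmem hsum0
    simp only [Pi.sub_apply, mul_sub] at h
    rw [Finset.sum_sub_distrib, hu1def, hu0def, sum_indicator_mul, sum_indicator_mul,
      sub_eq_zero] at h
    exact_mod_cast h
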